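/- Fix a horizon T ≥ 1 and define value functions recursively by V^T ≡ 0 on Δ(S) and V^t = L V^{t+1} for t = T−1, T−2, ..., 1. Then each V^t is well-defined, bounded and Borel, and for every t ∈ {1,...,T} there exists a set Λ^t ⊆ ℝ^S of slopes such that V^t(b) = sup_{α∈Λ^t} ⟨α, b⟩ for all b ∈ Δ(S); in particular each V^t is a convex function of the belief state. -/

import Mathlib

open MeasureTheory

section Defs

variable {S Z A : Type*}

/-- Observation weight `n_z(b,p) = Σ_s Σ_{s'} p_s(s',z) b_s`. -/
def obsW [Fintype S] (b : S → ℝ) (p : S → (S × Z) → ℝ) (z : Z) : ℝ :=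
  ∑ s, ∑ s', p s (s', z) * b s

/-- Bayesian belief update `f(b,p,z)`. -/
noncomputable def bUpd [Fintype S] (b : S → ℝ) (p : S → (S × Z) → ℝ) (z : Z) : S → ℝ :=
  fun s' => (∑ s, p s (s', z) * b s) / obsW b p z

/-- The support set `X̃_{as}`. -/
def XasSet [Fintype S] [Fintype Z] (pbar : (S × Z) → ℝ) :
    Set (((S × Z) → ℝ) × ((S × Z) → ℝ)) :=
  {x | (∀ i, x.1 i - pbar i ≤ x.2 i) ∧ (∀ i, pbar i - x.1 i ≤ x.2 i) ∧
       x.1 ∈ stdSimplex ℝ (S × Z)}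

/-- The box uncertainty set `B_{as}`. -/
def BasSet [Fintype S] [Fintype Z] (pbar c : (S × Z) → ℝ) : Set ((S × Z) → ℝ) :=
  {p | p ∈ stdSimplex ℝ (S × Z) ∧ ∀ i, |p i - pbar i| ≤ c i}

/-- The ambiguity set `D̃_{as}`. -/
def DasSet [Fintype S] [Fintype Z] (pbar c : (S × Z) → ℝ) :
    Set (Measure (((S × Z) → ℝ) × ((S × Z) → ℝ))) :=
  {μ | IsProbabilityMeasure μ ∧ μ (XasSet pbar) = 1 ∧
       Integrable (fun x => x.2) μ ∧ (∫ x, x.2 ∂μ) = c}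

/-- The product ambiguity set `D̃_a = ⊗_s D̃_{as}`. -/
def DaSet [Fintype S] [Fintype Z] (pbar c : S → (S × Z) → ℝ) :
    Set (Measure (S → ((S × Z) → ℝ) × ((S × Z) → ℝ))) :=
  {μ | ∃ ν : S → Measure (((S × Z) → ℝ) × ((S × Z) → ℝ)),
    (∀ s, ν s ∈ DasSet (pbar s) (c s)) ∧ μ = Measure.pi ν}

/-- The term `n_z(b,p) V(f(b,p,z))`, with the convention that it is `0` when `n_z(b,p) = 0`. -/
noncomputable def bTerm [Fintype S] (V : (S → ℝ) → ℝ) (b : S → ℝ)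
    (p : S → (S × Z) → ℝ) (z : Z) : ℝ :=
  if obsW b p z = 0 then 0 else obsW b p z * V (bUpd b p z)

/-- `U_V(b,a,μ̃)`. -/
noncomputable def UVal [Fintype S] [Fintype Z] (r : A → S → ℝ) (β : ℝ)
    (V : (S → ℝ) → ℝ) (b : S → ℝ) (a : A)
    (μ : Measure (S → ((S × Z) → ℝ) × ((S × Z) → ℝ))) : ℝ :=
  ∫ x, ((∑ s, b s * r a s) + β * ∑ z, bTerm V b (fun s => (x s).1) z) ∂μ

/-- The distributionally robust Bellman operator `L`. -/
noncomputable def Lop [Fintype S] [Fintype Z] [Fintype A]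
    (pbar c : A → S → (S × Z) → ℝ) (r : A → S → ℝ) (β : ℝ)
    (V : (S → ℝ) → ℝ) (b : S → ℝ) : ℝ :=
  ⨆ a : A, sInf ((fun μ => UVal r β V b a μ) '' DaSet (pbar a) (c a))

end Defs


namespace DRAux
open Set

variable {ι : Type*} [Fintype ι]

/-- pairing -/
def dotv (v w : ι → ℝ) : ℝ := ∑ i, v i * w i

/-- support function of a set -/
noncomputable def suppF (K : Set (ι → ℝ)) (x : ι → ℝ) : ℝ :=
  sSup ((fun v => dotv v x) '' K)

lemma dotv_comm (v w : ι → ℝ) : dotv v w = dotv w v := by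
  simp [dotv, mul_comm]

lemma dotv_add_right (v x y : ι → ℝ) : dotv v (x + y) = dotv v x + dotv v y := by
  simp [dotv, mul_add, Finset.sum_add_distrib]

lemma dotv_smul_right (v : ι → ℝ) (t : ℝ) (x : ι → ℝ) :
    dotv v (t • x) = t * dotv v x := by
  simp only [dotv, Pi.smul_apply, smul_eq_mul, Finset.mul_sum]
  exact Finset.sum_congr rfl fun i _ => by ring

lemma dotv_smul_left (t : ℝ) (v x : ι → ℝ) : dotv (t • v) x = t * dotv v x := by
  simp only [dotv, Pi.smul_apply, smul_eq_mul, Finset.mul_sum]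
  exact Finset.sum_congr rfl fun i _ => by ring

lemma continuous_dotv_left (x : ι → ℝ) : Continuous fun v : ι → ℝ => dotv v x := by
  unfold dotv; exact continuous_finset_sum _ fun i _ => ((continuous_apply i).mul continuous_const)

lemma continuous_dotv_right (v : ι → ℝ) : Continuous fun x : ι → ℝ => dotv v x := by
  unfold dotv; exact continuous_finset_sum _ fun i _ => (continuous_const.mul (continuous_apply i))

/-- coordinatewise bound from compactness -/
lemma exists_bound_of_isCompact {K : Set (ι → ℝ)} (hK : IsCompact K) :
    ∃ R : ℝ, 0 ≤ R ∧ ∀ v ∈ K, ∀ i, |v i| ≤ R := by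
  obtain ⟨R, hR⟩ := hK.isBounded.exists_norm_le
  exact ⟨max R 0, le_max_right _ _, fun v hv i =>
    (norm_le_pi_norm v i).trans ((hR v hv).trans (le_max_left _ _))⟩

lemma abs_dotv_le {R : ℝ} {v : ι → ℝ} (hv : ∀ i, |v i| ≤ R) (x : ι → ℝ) :
    |dotv v x| ≤ (Fintype.card ι) * R * ‖x‖ := by
  calc |dotv v x| ≤ ∑ i, |v i * x i| := Finset.abs_sum_le_sum_abs _ _
    _ ≤ ∑ _i : ι, R * ‖x‖ := by
        refine Finset.sum_le_sum fun i _ => ?_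
        rw [abs_mul]
        have h1 : |x i| ≤ ‖x‖ := norm_le_pi_norm x i
        have h0 : (0:ℝ) ≤ |x i| := abs_nonneg _
        nlinarith [abs_nonneg (v i), hv i]
    _ = (Fintype.card ι) * R * ‖x‖ := by
        rw [Finset.sum_const, Finset.card_univ, nsmul_eq_mul]; ring

lemma bddAbove_image {K : Set (ι → ℝ)} (hK : IsCompact K) (x : ι → ℝ) :
    BddAbove ((fun v => dotv v x) '' K) := by
  obtain ⟨R, _, hR⟩ := exists_bound_of_isCompact hK
  exact ⟨(Fintype.card ι) * R * ‖x‖, fun y ⟨v, hv, hvy⟩ => by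
    rw [← hvy]; exact (abs_le.1 (abs_dotv_le (hR v hv) x)).2⟩

lemma dotv_le_suppF {K : Set (ι → ℝ)} (hK : IsCompact K) {v : ι → ℝ} (hv : v ∈ K)
    (x : ι → ℝ) : dotv v x ≤ suppF K x :=
  le_csSup (bddAbove_image hK x) (mem_image_of_mem _ hv)

lemma suppF_le {K : Set (ι → ℝ)} (hne : K.Nonempty) {x : ι → ℝ} {m : ℝ}
    (h : ∀ v ∈ K, dotv v x ≤ m) : suppF K x ≤ m :=
  csSup_le (hne.image _) (fun y ⟨v, hv, hvy⟩ => hvy ▸ h v hv)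

lemma suppF_attained {K : Set (ι → ℝ)} (hK : IsCompact K) (hne : K.Nonempty) (x : ι → ℝ) :
    ∃ v ∈ K, suppF K x = dotv v x := by
  obtain ⟨v, hv, hmax⟩ := hK.exists_isMaxOn hne (continuous_dotv_left x).continuousOn
  exact ⟨v, hv, le_antisymm (suppF_le hne (fun w hw => hmax hw)) (dotv_le_suppF hK hv x)⟩

lemma suppF_zero {K : Set (ι → ℝ)} (hne : K.Nonempty) : suppF K 0 = 0 := by
  have : (fun v : ι → ℝ => dotv v 0) '' K = {0} := by
    apply Subset.antisymm
    · rintro y ⟨v, _, rfl⟩; simp [dotv]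
    · rintro y rfl; exact ⟨hne.choose, hne.choose_spec, by simp [dotv]⟩
  rw [suppF, this, csSup_singleton]

lemma suppF_add_le {K : Set (ι → ℝ)} (hK : IsCompact K) (hne : K.Nonempty) (x y : ι → ℝ) :
    suppF K (x + y) ≤ suppF K x + suppF K y :=
  suppF_le hne fun v hv => by
    rw [dotv_add_right]
    exact add_le_add (dotv_le_suppF hK hv x) (dotv_le_suppF hK hv y)

lemma suppF_smul {K : Set (ι → ℝ)} (hK : IsCompact K) (hne : K.Nonempty) {t : ℝ}
    (ht : 0 ≤ t) (x : ι → ℝ) : suppF K (t • x) = t * suppF K x := by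
  refine le_antisymm (suppF_le hne fun v hv => ?_) ?_
  · rw [dotv_smul_right]
    exact mul_le_mul_of_nonneg_left (dotv_le_suppF hK hv x) ht
  · obtain ⟨v, hv, hvx⟩ := suppF_attained hK hne x
    rw [hvx, ← dotv_smul_right]
    exact dotv_le_suppF hK hv _

lemma suppF_sub_le {K : Set (ι → ℝ)} (hK : IsCompact K) (hne : K.Nonempty) (x y : ι → ℝ) :
    suppF K x - suppF K y ≤ suppF K (x - y) := by
  have := suppF_add_le hK hne (x - y) y
  simpa using this

lemma suppF_le_norm {K : Set (ι → ℝ)} (hK : IsCompact K) (hne : K.Nonempty)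
    {R : ℝ} (hR : ∀ v ∈ K, ∀ i, |v i| ≤ R) (x : ι → ℝ) :
    suppF K x ≤ (Fintype.card ι) * R * ‖x‖ :=
  suppF_le hne fun v hv => (abs_le.1 (abs_dotv_le (hR v hv) x)).2

lemma abs_suppF_le {K : Set (ι → ℝ)} (hK : IsCompact K) (hne : K.Nonempty)
    {R : ℝ} (hR : ∀ v ∈ K, ∀ i, |v i| ≤ R) (x : ι → ℝ) :
    |suppF K x| ≤ (Fintype.card ι) * R * ‖x‖ := by
  rw [abs_le]
  constructor
  · obtain ⟨v, hv⟩ := hne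
    have h1 := dotv_le_suppF hK hv x
    have h2 := abs_dotv_le (hR v hv) x
    rw [abs_le] at h2
    linarith [h2.1]
  · exact suppF_le_norm hK hne hR x

lemma continuous_suppF {K : Set (ι → ℝ)} (hK : IsCompact K) (hne : K.Nonempty) :
    Continuous (suppF K) := by
  obtain ⟨R, hR0, hR⟩ := exists_bound_of_isCompact hK
  set C : ℝ := (Fintype.card ι) * R with hC
  have hC0 : 0 ≤ C := by positivity
  have key : ∀ x y : ι → ℝ, suppF K x - suppF K y ≤ C * ‖x - y‖ := fun x y =>
    (suppF_sub_le hK hne x y).trans (suppF_le_norm hK hne hR _)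
  rw [Metric.continuous_iff]
  intro x ε hε
  rcases eq_or_lt_of_le hC0 with hC' | hC'
  · exact ⟨1, one_pos, fun y _ => by
      have h1 := key y x; have h2 := key x y
      rw [← hC'] at h1 h2
      simp only [zero_mul] at h1 h2
      have : suppF K y = suppF K x := le_antisymm (by linarith) (by linarith)
      simpa [this, dist_self] ⟩
  · refine ⟨ε / C, by positivity, fun y hy => ?_⟩
    have h1 := key y x
    have h2 := key x y
    have hxy : ‖y - x‖ < ε / C := by rwa [← dist_eq_norm]
    have hyx : ‖x - y‖ < ε / C := by rwa [norm_sub_rev]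
    rw [Real.dist_eq, abs_lt]
    have e1 : C * ‖y - x‖ < ε := by
      have := mul_lt_mul_of_pos_left hxy hC'
      rwa [mul_div_cancel₀ _ (ne_of_gt hC')] at this
    have e2 : C * ‖x - y‖ < ε := by
      have := mul_lt_mul_of_pos_left hyx hC'
      rwa [mul_div_cancel₀ _ (ne_of_gt hC')] at this
    constructor <;> linarith

lemma csSup_const_add {c : ℝ} {s : Set ℝ} (hne : s.Nonempty) (hbdd : BddAbove s) :
    sSup ((fun x => c + x) '' s) = c + sSup s := by
  refine le_antisymm (csSup_le (hne.image _) ?_) ?_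
  · rintro y ⟨x, hx, rfl⟩; exact add_le_add_right (le_csSup hbdd hx) c
  · have hb : BddAbove ((fun x => c + x) '' s) := by
      obtain ⟨B, hB⟩ := hbdd
      exact ⟨c + B, by rintro y ⟨x, hx, rfl⟩; exact add_le_add_right (hB hx) c⟩
    have : sSup s ≤ sSup ((fun x => c + x) '' s) - c := by
      refine csSup_le hne fun x hx => ?_
      have := le_csSup hb (mem_image_of_mem _ hx)
      linarith
    linarith

lemma csInf_const_add {c : ℝ} {s : Set ℝ} (hne : s.Nonempty) (hbdd : BddBelow s) :
    sInf ((fun x => c + x) '' s) = c + sInf s := by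
  refine le_antisymm ?_ (le_csInf (hne.image _) ?_)
  · have hb : BddBelow ((fun x => c + x) '' s) := by
      obtain ⟨B, hB⟩ := hbdd
      exact ⟨c + B, by rintro y ⟨x, hx, rfl⟩; exact add_le_add_right (hB hx) c⟩
    have : sInf ((fun x => c + x) '' s) - c ≤ sInf s := by
      refine le_csInf hne fun x hx => ?_
      have := csInf_le hb (mem_image_of_mem _ hx)
      linarith
    linarith
  · rintro y ⟨x, hx, rfl⟩; exact add_le_add_right (csInf_le hbdd hx) c

lemma csSup_const_mul {k : ℝ} (hk : 0 < k) {s : Set ℝ} (hne : s.Nonempty) (hbdd : BddAbove s) :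
    sSup ((fun x => k * x) '' s) = k * sSup s := by
  have hb : BddAbove ((fun x => k * x) '' s) := by
    obtain ⟨B, hB⟩ := hbdd
    exact ⟨k * B, by rintro y ⟨x, hx, rfl⟩; exact mul_le_mul_of_nonneg_left (hB hx) hk.le⟩
  refine le_antisymm (csSup_le (hne.image _) ?_) ?_
  · rintro y ⟨x, hx, rfl⟩; exact mul_le_mul_of_nonneg_left (le_csSup hbdd hx) hk.le
  · have : sSup s ≤ sSup ((fun x => k * x) '' s) / k := by
      refine csSup_le hne fun x hx => ?_
      rw [le_div_iff₀ hk, mul_comm]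
      exact le_csSup hb (mem_image_of_mem _ hx)
    calc k * sSup s ≤ k * (sSup ((fun x => k * x) '' s) / k) :=
          mul_le_mul_of_nonneg_left this hk.le
      _ = sSup ((fun x => k * x) '' s) := by field_simp

lemma csSup_affine {c k : ℝ} (hk : 0 < k) {s : Set ℝ} (hne : s.Nonempty) (hbdd : BddAbove s) :
    sSup ((fun x => c + k * x) '' s) = c + k * sSup s := by
  have h1 : ((fun x => c + k * x) '' s) = (fun x => c + x) '' ((fun x => k * x) '' s) := by
    rw [Set.image_image]
  rw [h1, csSup_const_add (hne.image _), csSup_const_mul hk hne hbdd]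
  obtain ⟨B, hB⟩ := hbdd
  exact ⟨k * B, by rintro y ⟨x, hx, rfl⟩; exact mul_le_mul_of_nonneg_left (hB hx) hk.le⟩

/-- representation of continuous linear functionals on `ι → ℝ` -/
lemma clm_eq_dotv [DecidableEq ι] (f : (ι → ℝ) →L[ℝ] ℝ) (w : ι → ℝ) :
    f w = dotv (fun i => f (Pi.single i 1)) w := by
  have hw : w = ∑ i, Pi.single i (w i) := by
    rw [Finset.univ_sum_single]
  conv_lhs => rw [hw]
  rw [map_sum]
  refine Finset.sum_congr rfl fun i _ => ?_
  have : Pi.single i (w i) = (w i) • (Pi.single i 1 : ι → ℝ) := by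
    rw [← Pi.single_smul, smul_eq_mul, mul_one]
  rw [this, _root_.map_smul, smul_eq_mul, mul_comm]

/-- dual characterization of membership in a compact convex set -/
lemma mem_of_dotv_le {K : Set (ι → ℝ)} (hK : IsCompact K) (hKcv : Convex ℝ K)
    (hne : K.Nonempty) {v : ι → ℝ} (h : ∀ x, dotv v x ≤ suppF K x) : v ∈ K := by
  classical
  by_contra hv
  obtain ⟨f, u, hfK, hfv⟩ := geometric_hahn_banach_closed_point hKcv hK.isClosed hv
  set y : ι → ℝ := fun i => f (Pi.single i 1) with hy
  have hrepr : ∀ w : ι → ℝ, f w = dotv w y := fun w => by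
    rw [clm_eq_dotv f w, dotv_comm]
  have h1 : suppF K y ≤ u := suppF_le hne fun w hw => by
    rw [← hrepr w]; exact (hfK w hw).le
  have h2 : u < dotv v y := by rw [← hrepr v]; exact hfv
  exact absurd ((h y).trans h1) (not_le.mpr h2)

lemma minimax_pos {W K : Set (ι → ℝ)} (hWc : IsCompact W) (hWne : W.Nonempty)
    (hWcv : Convex ℝ W) (hKc : IsCompact K) (hKne : K.Nonempty) (hKcv : Convex ℝ K)
    (hη : 0 < sInf (suppF K '' W)) :
    ∃ v ∈ K, ∀ w ∈ W, sInf (suppF K '' W) ≤ dotv v w := by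
  classical
  set η := sInf (suppF K '' W) with hηdef
  obtain ⟨w0, hw0W, hw0min⟩ := hWc.exists_isMinOn hWne (continuous_suppF hKc hKne).continuousOn
  have hmin : ∀ w ∈ W, suppF K w0 ≤ suppF K w := fun w hw => hw0min hw
  have hsinf : η = suppF K w0 := by
    refine le_antisymm (csInf_le ⟨suppF K w0, ?_⟩ (Set.mem_image_of_mem _ hw0W))
      (le_csInf (hWne.image _) ?_)
    · rintro x ⟨w, hw, rfl⟩; exact hmin w hw
    · rintro x ⟨w, hw, rfl⟩; exact hmin w hw
  set U : Set (ι → ℝ) := {x | suppF K x < η} with hU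
  have hUopen : IsOpen U := isOpen_lt (continuous_suppF hKc hKne) continuous_const
  have hUcv : Convex ℝ U := by
    intro x hx y hy a b ha hb hab
    have key : a * suppF K x + b * suppF K y < η := by
      rcases eq_or_lt_of_le ha with rfl | ha'
      · simp only [zero_mul, zero_add]
        have hb1 : b = 1 := by linarith
        rw [hb1, one_mul]; exact hy
      · have h1 : a * suppF K x < a * η := by
          exact mul_lt_mul_of_pos_left hx ha'
        have h2 : b * suppF K y ≤ b * η := mul_le_mul_of_nonneg_left hy.le hb
        nlinarith
    have : suppF K (a • x + b • y) ≤ a * suppF K x + b * suppF K y := by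
      calc suppF K (a • x + b • y) ≤ suppF K (a • x) + suppF K (b • y) :=
            suppF_add_le hKc hKne _ _
        _ = a * suppF K x + b * suppF K y := by
            rw [suppF_smul hKc hKne ha, suppF_smul hKc hKne hb]
    exact lt_of_le_of_lt this key
  have h0U : (0 : ι → ℝ) ∈ U := by
    show suppF K 0 < η
    rw [suppF_zero hKne]; exact hη
  have hdisj : Disjoint U W := by
    rw [Set.disjoint_left]
    intro x hxU hxW
    exact absurd hxU (not_lt.mpr (hsinf ▸ hmin x hxW))
  obtain ⟨f, u, hfU, hfW⟩ := geometric_hahn_banach_open hUcv hUopen hWcv hdisj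
  have hu0 : 0 < u := by have := hfU 0 h0U; simpa using this
  have hfw0 : u ≤ f w0 := hfW w0 hw0W
  -- master inequality
  have master : ∀ x : ι → ℝ, η * f x ≤ u * suppF K x := by
    intro x
    set m := suppF K x with hm
    set t := η / (2 * |m| + 1) with ht
    have htpos : 0 < t := div_pos hη (by positivity)
    have htm : t * m ≤ η / 2 := by
      have h1 : t * m ≤ |t * m| := le_abs_self _
      have h2 : |t * m| = η * |m| / (2 * |m| + 1) := by
        rw [abs_mul, ht, abs_div, abs_of_pos hη, abs_of_pos (show (0:ℝ) < 2*|m|+1 by positivity)]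
        ring
      have h3 : η * |m| / (2 * |m| + 1) ≤ η / 2 := by
        rw [div_le_div_iff₀ (by positivity) (by norm_num)]
        nlinarith [abs_nonneg m, hη]
      linarith
    have key : ∀ r : ℝ, 0 < r → r < 1 - t * m / η → t * f x < u * (1 - r) := by
      intro r hr hrlt
      have hrη : t * m + r * η < η := by
        have : r * η < (1 - t * m / η) * η := mul_lt_mul_of_pos_right hrlt hη
        have he : (1 - t * m / η) * η = η - t * m := by field_simp
        nlinarith
      have hsupp : suppF K (t • x + r • w0) < η := by
        calc suppF K (t • x + r • w0) ≤ suppF K (t • x) + suppF K (r • w0) :=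
              suppF_add_le hKc hKne _ _
          _ = t * m + r * suppF K w0 := by
              rw [suppF_smul hKc hKne htpos.le, suppF_smul hKc hKne hr.le, hm]
          _ < η := by rw [← hsinf]; exact hrη
      have hfin := hfU _ hsupp
      rw [map_add, _root_.map_smul, _root_.map_smul, smul_eq_mul, smul_eq_mul] at hfin
      have : r * u ≤ r * f w0 := mul_le_mul_of_nonneg_left hfw0 hr.le
      nlinarith
    have hr2 : t * m / η ≤ 1 / 2 := by
      rw [div_le_div_iff₀ hη (by norm_num)]
      nlinarith
    have hconc : t * f x ≤ u * (t * m / η) := by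
      refine le_of_forall_pos_lt_add fun ε hε => ?_
      set δ := min (ε / u) (1/4) with hδ
      have hδpos : 0 < δ := lt_min (div_pos hε hu0) (by norm_num)
      set r := (1 - t * m / η) - δ with hr
      have hrpos : 0 < r := by
        have : δ ≤ 1/4 := min_le_right _ _
        have : (1:ℝ)/2 ≤ 1 - t * m / η := by linarith
        simp only [hr]; linarith [min_le_right (ε/u) (1/4 : ℝ)]
      have hrlt : r < 1 - t * m / η := by simp only [hr]; linarith
      have hk := key r hrpos hrlt
      have huδ : u * δ ≤ ε := by
        have : δ ≤ ε / u := min_le_left _ _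
        calc u * δ ≤ u * (ε / u) := mul_le_mul_of_nonneg_left this hu0.le
          _ = ε := by field_simp
      have heq : u * (1 - r) = u * (t * m / η) + u * δ := by rw [hr]; ring
      calc t * f x < u * (1 - r) := hk
        _ = u * (t * m / η) + u * δ := heq
        _ ≤ u * (t * m / η) + ε := by linarith
    -- divide by t, multiply by η
    have h1 : f x ≤ u * m / η := by
      have := hconc
      rw [show u * (t * m / η) = t * (u * m / η) by ring] at this
      exact le_of_mul_le_mul_left this htpos
    calc η * f x ≤ η * (u * m / η) := mul_le_mul_of_nonneg_left h1 hη.le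
      _ = u * m := by field_simp
  -- conclude
  set y : ι → ℝ := fun i => f (Pi.single i 1) with hy
  have hrepr : ∀ w : ι → ℝ, f w = dotv w y := fun w => by
    rw [clm_eq_dotv f w, dotv_comm]
  refine ⟨(η / u) • y, ?_, ?_⟩
  · refine mem_of_dotv_le hKc hKcv hKne fun x => ?_
    rw [dotv_smul_left, ← dotv_comm, ← hrepr x]
    have := master x
    rw [div_mul_eq_mul_div, div_le_iff₀ hu0]
    linarith [master x]
  · intro w hw
    rw [dotv_smul_left, ← dotv_comm, ← hrepr w]
    have h1 : (η / u) * u ≤ (η / u) * f w :=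
      mul_le_mul_of_nonneg_left (hfW w hw) (by positivity)
    have h2 : (η / u) * u = η := by field_simp
    linarith


/-- lift to Option -/
def up (t : ℝ) (x : ι → ℝ) : Option ι → ℝ := fun o => Option.elim o t x

lemma up_none (t : ℝ) (x : ι → ℝ) : up t x none = t := rfl
lemma up_some (t : ℝ) (x : ι → ℝ) (i : ι) : up t x (some i) = x i := rfl

lemma dotv_up (t₁ t₂ : ℝ) (v w : ι → ℝ) :
    dotv (up t₁ v) (up t₂ w) = t₁ * t₂ + dotv v w := by
  simp [dotv, Fintype.sum_option, up]

lemma continuous_up (t : ℝ) : Continuous (up (ι := ι) t) := by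
  refine continuous_pi fun o => ?_
  cases o with
  | none => exact continuous_const
  | some i => exact continuous_apply i

lemma convex_up_image {s : Set (ι → ℝ)} (hs : Convex ℝ s) (t : ℝ) :
    Convex ℝ (up t '' s) := by
  rintro _ ⟨x, hx, rfl⟩ _ ⟨y, hy, rfl⟩ a b ha hb hab
  refine ⟨a • x + b • y, hs hx hy ha hb hab, ?_⟩
  funext o
  cases o with
  | none => simp only [up, Option.elim, Pi.add_apply, Pi.smul_apply, smul_eq_mul]
            linear_combination (-t) * hab
  | some i => simp [up]

lemma suppF_up_image {K : Set (ι → ℝ)} (hK : IsCompact K) (hne : K.Nonempty)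
    (t₁ t₂ : ℝ) (w : ι → ℝ) :
    suppF (up t₁ '' K) (up t₂ w) = t₁ * t₂ + suppF K w := by
  unfold suppF
  have h1 : (fun v => dotv v (up t₂ w)) '' (up t₁ '' K)
      = (fun x => t₁ * t₂ + x) '' ((fun v => dotv v w) '' K) := by
    rw [Set.image_image, Set.image_image]
    exact Set.image_congr fun v _ => dotv_up t₁ t₂ v w
  rw [h1, csSup_const_add (hne.image _) (bddAbove_image hK w)]

lemma minimax {W K : Set (ι → ℝ)} (hWc : IsCompact W) (hWne : W.Nonempty)
    (hWcv : Convex ℝ W) (hKc : IsCompact K) (hKne : K.Nonempty) (hKcv : Convex ℝ K) :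
    ∃ v ∈ K, ∀ w ∈ W, sInf (suppF K '' W) ≤ dotv v w := by
  set η := sInf (suppF K '' W) with hηdef
  set K₁ : Set (Option ι → ℝ) := up 1 '' K with hK₁
  set W₁ : Set (Option ι → ℝ) := up (1 - η) '' W with hW₁
  have hK₁c : IsCompact K₁ := hKc.image (continuous_up 1)
  have hW₁c : IsCompact W₁ := hWc.image (continuous_up (1 - η))
  have hK₁ne : K₁.Nonempty := hKne.image _
  have hW₁ne : W₁.Nonempty := hWne.image _
  have hbdd : BddBelow (suppF K '' W) :=
    (hWc.image_of_continuousOn (continuous_suppF hKc hKne).continuousOn).bddBelow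
  have himg : suppF K₁ '' W₁ = (fun x => (1 - η) + x) '' (suppF K '' W) := by
    rw [hW₁, Set.image_image, Set.image_image]
    refine Set.image_congr fun w _ => ?_
    rw [suppF_up_image hKc hKne, one_mul, add_comm (1 - η)]
  have hη₁ : sInf (suppF K₁ '' W₁) = 1 := by
    rw [himg, csInf_const_add (hWne.image _) hbdd, ← hηdef]; ring
  obtain ⟨v₁, hv₁K, hv₁⟩ := minimax_pos hW₁c hW₁ne (convex_up_image hWcv _)
    hK₁c hK₁ne (convex_up_image hKcv _) (by rw [hη₁]; norm_num)
  obtain ⟨v, hvK, rfl⟩ := hv₁K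
  refine ⟨v, hvK, fun w hw => ?_⟩
  have := hv₁ (up (1 - η) w) (Set.mem_image_of_mem _ hw)
  rw [hη₁, dotv_up, one_mul] at this
  linarith


open MeasureTheory

section MeasureAux

variable {ι : Type*} [Fintype ι] {δ : ι → Type*} [∀ i, MeasurableSpace (δ i)]

lemma map_eval_pi (ν : ∀ i, Measure (δ i)) [∀ i, IsProbabilityMeasure (ν i)] (i : ι) :
    (Measure.pi ν).map (Function.eval i) = ν i := by
  classical
  refine Measure.ext fun A hA => ?_
  rw [Measure.map_apply (measurable_pi_apply i) hA]
  have hpre : Function.eval i ⁻¹' A = Set.pi Set.univ (Function.update (fun j => Set.univ) i A) := by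
    ext x
    simp only [Set.mem_preimage, Set.mem_pi, Set.mem_univ, forall_true_left]
    constructor
    · intro hx j
      by_cases hj : j = i
      · subst hj; rwa [Function.update_self]
      · rw [Function.update_of_ne hj]; trivial
    · intro hx
      have := hx i
      rwa [Function.update_self] at this
  rw [hpre, Measure.pi_pi]
  rw [Finset.prod_eq_single_of_mem i (Finset.mem_univ i)]
  · rw [Function.update_self]
  · intro j _ hj
    rw [Function.update_of_ne hj]
    exact measure_univ

lemma integral_eval_pi (ν : ∀ i, Measure (δ i)) [∀ i, IsProbabilityMeasure (ν i)] (i : ι)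
    (F : δ i → ℝ) (hF : AEStronglyMeasurable F (ν i)) :
    ∫ x, F (x i) ∂(Measure.pi ν) = ∫ y, F y ∂(ν i) := by
  have hF' : AEStronglyMeasurable F ((Measure.pi ν).map (Function.eval i)) := by
    rw [map_eval_pi ν i]; exact hF
  rw [← map_eval_pi ν i, integral_map (measurable_pi_apply i).aemeasurable hF']

lemma pi_dirac (x : ∀ i, δ i) :
    Measure.pi (fun i => Measure.dirac (x i)) = Measure.dirac x := by
  classical
  refine Measure.pi_eq (μ := fun i => Measure.dirac (x i)) fun A hA => ?_
  rw [Measure.dirac_apply' _ (MeasurableSet.univ_pi hA)]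
  by_cases h : ∀ i, x i ∈ A i
  · have hx : x ∈ Set.pi Set.univ A := fun i _ => h i
    rw [Set.indicator_of_mem hx]
    rw [Finset.prod_eq_one fun i _ => ?_]
    · rfl
    · rw [Measure.dirac_apply' _ (hA i), Set.indicator_of_mem (h i)]; rfl
  · push_neg at h
    obtain ⟨i, hi⟩ := h
    have hx : x ∉ Set.pi Set.univ A := fun hmem => hi (hmem i trivial)
    rw [Set.indicator_of_notMem hx]
    rw [Finset.prod_eq_zero (Finset.mem_univ i)]
    rw [Measure.dirac_apply' _ (hA i), Set.indicator_of_notMem hi]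

end MeasureAux

end DRAux


section MainAux

open DRAux Set MeasureTheory

variable {S Z : Type*} [Fintype S] [Nonempty S] [Fintype Z] [Nonempty Z]

lemma isClosed_xasSet (pbar : (S × Z) → ℝ) : IsClosed (XasSet pbar) := by
  have h1 : XasSet pbar = {x : ((S×Z)→ℝ) × ((S×Z)→ℝ) | ∀ i, x.1 i - pbar i ≤ x.2 i} ∩
      ({x | ∀ i, pbar i - x.1 i ≤ x.2 i} ∩ {x | x.1 ∈ stdSimplex ℝ (S × Z)}) := rfl
  rw [h1]
  have c1 : ∀ i : S × Z, Continuous fun x : ((S×Z)→ℝ) × ((S×Z)→ℝ) => x.1 i :=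
    fun i => (continuous_apply i).comp continuous_fst
  have c2 : ∀ i : S × Z, Continuous fun x : ((S×Z)→ℝ) × ((S×Z)→ℝ) => x.2 i :=
    fun i => (continuous_apply i).comp continuous_snd
  refine IsClosed.inter ?_ (IsClosed.inter ?_ ?_)
  · have : {x : ((S×Z)→ℝ) × ((S×Z)→ℝ) | ∀ i, x.1 i - pbar i ≤ x.2 i}
        = ⋂ i, {x | x.1 i - pbar i ≤ x.2 i} := by ext x; simp
    rw [this]
    exact isClosed_iInter fun i => isClosed_le ((c1 i).sub continuous_const) (c2 i)
  · have : {x : ((S×Z)→ℝ) × ((S×Z)→ℝ) | ∀ i, pbar i - x.1 i ≤ x.2 i}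
        = ⋂ i, {x | pbar i - x.1 i ≤ x.2 i} := by ext x; simp
    rw [this]
    exact isClosed_iInter fun i => isClosed_le (continuous_const.sub (c1 i)) (c2 i)
  · exact (isClosed_stdSimplex _ _).preimage continuous_fst

lemma basSet_subset (pbar c : (S × Z) → ℝ) : BasSet pbar c ⊆ stdSimplex ℝ (S × Z) :=
  fun _ hq => hq.1

lemma pbar_mem_basSet {pbar c : (S × Z) → ℝ} (hp : pbar ∈ stdSimplex ℝ (S × Z))
    (hc : ∀ i, 0 ≤ c i) : pbar ∈ BasSet pbar c :=
  ⟨hp, fun i => by simpa using hc i⟩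

lemma basSet_isCompact (pbar c : (S × Z) → ℝ) : IsCompact (BasSet pbar c) := by
  refine (isCompact_stdSimplex _ _).of_isClosed_subset ?_ (basSet_subset pbar c)
  have h1 : BasSet pbar c = stdSimplex ℝ (S × Z) ∩ ⋂ i, {p | |p i - pbar i| ≤ c i} := by
    ext p; simp [BasSet]
  rw [h1]
  refine (isClosed_stdSimplex _ _).inter (isClosed_iInter fun i => ?_)
  have : Continuous fun p : (S × Z) → ℝ => |p i - pbar i| :=
    ((continuous_apply i).sub continuous_const).abs
  exact isClosed_le this continuous_const

lemma basSet_convex (pbar c : (S × Z) → ℝ) : Convex ℝ (BasSet pbar c) := by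
  intro p hp q hq a b ha hb hab
  refine ⟨convex_stdSimplex ℝ _ hp.1 hq.1 ha hb hab, fun i => ?_⟩
  have h1 := hp.2 i
  have h2 := hq.2 i
  have : (a • p + b • q) i - pbar i = a * (p i - pbar i) + b * (q i - pbar i) := by
    simp only [Pi.add_apply, Pi.smul_apply, smul_eq_mul]
    linear_combination (pbar i) * hab
  rw [this]
  calc |a * (p i - pbar i) + b * (q i - pbar i)|
      ≤ |a * (p i - pbar i)| + |b * (q i - pbar i)| := abs_add_le _ _
    _ = a * |p i - pbar i| + b * |q i - pbar i| := by
        rw [abs_mul, abs_mul, abs_of_nonneg ha, abs_of_nonneg hb]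
    _ ≤ a * c i + b * c i := by
        exact add_le_add (mul_le_mul_of_nonneg_left h1 ha) (mul_le_mul_of_nonneg_left h2 hb)
    _ = c i := by rw [← add_mul, hab, one_mul]

/-- rewrite `bTerm` as a support function of the unnormalized updated belief -/
lemma bTerm_eq {Λ : Set (S → ℝ)} (hΛc : IsCompact Λ) (hΛne : Λ.Nonempty)
    {V : (S → ℝ) → ℝ} (hV : ∀ y ∈ stdSimplex ℝ S, V y = suppF Λ y)
    {b : S → ℝ} (hb : b ∈ stdSimplex ℝ S) {q : S → (S × Z) → ℝ}
    (hq : ∀ s, q s ∈ stdSimplex ℝ (S × Z)) (z : Z) :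
    bTerm V b q z = suppF Λ (fun s' => ∑ s, b s * q s (s', z)) := by
  set w : S → ℝ := fun s' => ∑ s, b s * q s (s', z) with hw
  have hwnn : ∀ s', 0 ≤ w s' :=
    fun s' => Finset.sum_nonneg fun s _ => mul_nonneg (hb.1 s) ((hq s).1 (s', z))
  have hobs : obsW b q z = ∑ s', w s' := by
    rw [obsW, Finset.sum_comm]
    exact Finset.sum_congr rfl fun s' _ => Finset.sum_congr rfl fun s _ => mul_comm _ _
  by_cases h0 : obsW b q z = 0
  · rw [bTerm, if_pos h0]
    have hwz : ∀ s', w s' = 0 := by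
      intro s'
      have hsum : ∑ s', w s' = 0 := by rw [← hobs, h0]
      have := (Finset.sum_eq_zero_iff_of_nonneg (fun s' _ => hwnn s')).mp hsum
      exact this s' (Finset.mem_univ s')
    have hw0 : w = (0 : S → ℝ) := funext hwz
    rw [hw0]
    exact (suppF_zero hΛne).symm
  · have hpos : 0 < obsW b q z := by
      rcases lt_or_eq_of_le (show (0:ℝ) ≤ obsW b q z by
        rw [hobs]; exact Finset.sum_nonneg fun s' _ => hwnn s') with h | h
      · exact h
      · exact absurd h.symm h0
    rw [bTerm, if_neg h0]
    have hupd : bUpd b q z = fun s' => w s' / obsW b q z := by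
      funext s'
      rw [bUpd, hw]
      congr 1
      exact Finset.sum_congr rfl fun s _ => mul_comm _ _
    have hmem : bUpd b q z ∈ stdSimplex ℝ S := by
      rw [hupd]
      refine ⟨fun s' => div_nonneg (hwnn s') hpos.le, ?_⟩
      rw [← Finset.sum_div, ← hobs, div_self h0]
    rw [hV _ hmem, hupd]
    have hsm : w = obsW b q z • (fun s' => w s' / obsW b q z) := by
      funext s'
      simp only [Pi.smul_apply, smul_eq_mul]
      field_simp
    calc obsW b q z * suppF Λ (fun s' => w s' / obsW b q z)
        = suppF Λ (obsW b q z • fun s' => w s' / obsW b q z) :=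
          (suppF_smul hΛc hΛne hpos.le _).symm
      _ = suppF Λ w := by rw [← hsm]

/-- the lifted slope set over `Z × S` -/
def liftK (Λ : Set (S → ℝ)) : Set (Z × S → ℝ) := {v | ∀ z, (fun s => v (z, s)) ∈ Λ}

lemma liftK_nonempty {Λ : Set (S → ℝ)} (h : Λ.Nonempty) : (liftK (Z := Z) Λ).Nonempty := by
  obtain ⟨α, hα⟩ := h
  exact ⟨fun p => α p.2, fun z => hα⟩

lemma liftK_convex {Λ : Set (S → ℝ)} (h : Convex ℝ Λ) : Convex ℝ (liftK (Z := Z) Λ) := by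
  intro x hx y hy a b ha hb hab z
  have := h (hx z) (hy z) ha hb hab
  convert this using 1
  rfl

lemma liftK_isCompact {Λ : Set (S → ℝ)} (hc : IsCompact Λ) : IsCompact (liftK (Z := Z) Λ) := by
  obtain ⟨R, hR0, hR⟩ := exists_bound_of_isCompact hc
  rw [Metric.isCompact_iff_isClosed_bounded]
  constructor
  · have : liftK (Z := Z) Λ = ⋂ z, (fun (v : Z × S → ℝ) (s : S) => v (z, s)) ⁻¹' Λ := by
      ext v; simp [liftK]
    rw [this]
    exact isClosed_iInter fun z => hc.isClosed.preimage
      (continuous_pi fun s => continuous_apply (z, s))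
  · rw [Metric.isBounded_iff_subset_closedBall 0]
    refine ⟨R, fun v hv => ?_⟩
    rw [Metric.mem_closedBall, dist_zero_right]
    rw [pi_norm_le_iff_of_nonneg hR0]
    intro p
    have := hR _ (hv p.1) p.2
    simpa using this

lemma suppF_liftK {Λ : Set (S → ℝ)} (hΛc : IsCompact Λ) (hΛne : Λ.Nonempty)
    (x : Z × S → ℝ) :
    suppF (liftK (Z := Z) Λ) x = ∑ z, suppF Λ (fun s => x (z, s)) := by
  refine le_antisymm (suppF_le (liftK_nonempty hΛne) fun v hv => ?_) ?_
  · have hsplit : dotv v x = ∑ z, dotv (fun s => v (z, s)) (fun s => x (z, s)) := by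
      rw [dotv, Fintype.sum_prod_type]
      exact Finset.sum_congr rfl fun z _ => rfl
    rw [hsplit]
    exact Finset.sum_le_sum fun z _ => dotv_le_suppF hΛc (hv z) _
  · have hch : ∀ z : Z, ∃ α ∈ Λ, suppF Λ (fun s => x (z, s)) = dotv α (fun s => x (z, s)) :=
      fun z => suppF_attained hΛc hΛne _
    choose α hαmem hαeq using hch
    have hv : (fun p : Z × S => α p.1 p.2) ∈ liftK (Z := Z) Λ := fun z => hαmem z
    have : dotv (fun p : Z × S => α p.1 p.2) x = ∑ z, suppF Λ (fun s => x (z, s)) := by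
      rw [dotv, Fintype.sum_prod_type]
      exact Finset.sum_congr rfl fun z _ => (hαeq z).symm
    rw [← this]
    exact dotv_le_suppF (liftK_isCompact hΛc) hv x

/-- inner minimized linear value -/
noncomputable def mval (B : Set ((S × Z) → ℝ)) (v : Z × S → ℝ) : ℝ :=
  sInf ((fun q => DRAux.dotv v (fun p : Z × S => q (p.2, p.1))) '' B)

lemma box_inf_eq {Λ : Set (S → ℝ)} (hΛc : IsCompact Λ) (hΛne : Λ.Nonempty) (hΛcv : Convex ℝ Λ)
    {b : S → ℝ} (hb : b ∈ stdSimplex ℝ S) (Bs : S → Set ((S × Z) → ℝ))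
    (hBc : ∀ s, IsCompact (Bs s)) (hBne : ∀ s, (Bs s).Nonempty) (hBcv : ∀ s, Convex ℝ (Bs s)) :
    sInf ((fun q : S → (S × Z) → ℝ => ∑ z, suppF Λ (fun s' => ∑ s, b s * q s (s', z))) ''
        (Set.pi Set.univ Bs))
      = sSup ((fun v => ∑ s, b s * mval (Bs s) v) '' liftK (Z := Z) Λ) := by
  classical
  set K' : Set (Z × S → ℝ) := liftK (Z := Z) Λ with hK'def
  have hK'c : IsCompact K' := liftK_isCompact hΛc
  have hK'ne : K'.Nonempty := liftK_nonempty hΛne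
  have hK'cv : Convex ℝ K' := liftK_convex hΛcv
  set Lm : (S → (S × Z) → ℝ) → (Z × S → ℝ) := fun q p => ∑ s, b s * q s (p.2, p.1) with hLm
  have hΦeq : ∀ q : S → (S × Z) → ℝ,
      (∑ z, suppF Λ (fun s' => ∑ s, b s * q s (s', z))) = suppF K' (Lm q) := by
    intro q
    rw [suppF_liftK hΛc hΛne (Lm q)]
  set piB := Set.pi Set.univ Bs with hpiB
  have hpiBne : piB.Nonempty := Set.univ_pi_nonempty_iff.mpr hBne
  have himg : ((fun q : S → (S × Z) → ℝ => ∑ z, suppF Λ (fun s' => ∑ s, b s * q s (s', z))) ''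
      piB) = suppF K' '' (Lm '' piB) := by
    rw [Set.image_image]
    exact Set.image_congr fun q _ => hΦeq q
  set W := Lm '' piB with hW
  have hLmcont : Continuous Lm :=
    continuous_pi fun p => continuous_finset_sum _ fun s _ =>
      continuous_const.mul ((continuous_apply (p.2, p.1)).comp (continuous_apply s))
  have hWc : IsCompact W := (isCompact_univ_pi hBc).image hLmcont
  have hWne : W.Nonempty := hpiBne.image _
  have hWcv : Convex ℝ W := by
    rintro _ ⟨q₁, h₁, rfl⟩ _ ⟨q₂, h₂, rfl⟩ a b' ha hb' hab
    refine ⟨a • q₁ + b' • q₂, (convex_pi fun s _ => hBcv s) h₁ h₂ ha hb' hab, ?_⟩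
    funext p
    simp only [hLm, Pi.add_apply, Pi.smul_apply, smul_eq_mul]
    rw [Finset.mul_sum, Finset.mul_sum, ← Finset.sum_add_distrib]
    exact Finset.sum_congr rfl fun s _ => by ring
  obtain ⟨vstar, hvstarK, hvstar⟩ := minimax hWc hWne hWcv hK'c hK'ne hK'cv
  set η := sInf (suppF K' '' W) with hη
  have hcflip : ∀ v : Z × S → ℝ,
      Continuous fun q : (S × Z) → ℝ => dotv v (fun p : Z × S => q (p.2, p.1)) := by
    intro v
    unfold dotv
    exact continuous_finset_sum _ fun p _ =>
      continuous_const.mul (continuous_apply (p.2, p.1))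
  have hBbdd : ∀ s (v : Z × S → ℝ),
      BddBelow ((fun q => dotv v (fun p : Z × S => q (p.2, p.1))) '' Bs s) := fun s v =>
    ((hBc s).image_of_continuousOn (hcflip v).continuousOn).bddBelow
  have hmval_le : ∀ (v : Z × S → ℝ) s {q}, q ∈ Bs s →
      mval (Bs s) v ≤ dotv v (fun p : Z × S => q (p.2, p.1)) := by
    intro v s q hq
    exact csInf_le (hBbdd _ _) (Set.mem_image_of_mem _ hq)
  have hdotLm : ∀ (v : Z × S → ℝ) (q : S → (S × Z) → ℝ),
      dotv v (Lm q) = ∑ s, b s * dotv v (fun p : Z × S => q s (p.2, p.1)) := by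
    intro v q
    have hterm : ∀ p : Z × S, v p * Lm q p = ∑ s, b s * (v p * q s (p.2, p.1)) := by
      intro p
      simp only [hLm]
      rw [Finset.mul_sum]
      exact Finset.sum_congr rfl fun s _ => by ring
    calc dotv v (Lm q) = ∑ p, ∑ s, b s * (v p * q s (p.2, p.1)) :=
          Finset.sum_congr rfl fun p _ => hterm p
      _ = ∑ s, ∑ p : Z × S, b s * (v p * q s (p.2, p.1)) := Finset.sum_comm
      _ = ∑ s, b s * dotv v (fun p : Z × S => q s (p.2, p.1)) :=
          Finset.sum_congr rfl fun s _ => by rw [dotv, Finset.mul_sum]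
  have hub : ∀ v ∈ K', (∑ s, b s * mval (Bs s) v) ≤ η := by
    intro v hv
    refine le_csInf (hWne.image _) ?_
    rintro y ⟨w, ⟨q, hq, rfl⟩, rfl⟩
    calc (∑ s, b s * mval (Bs s) v) ≤ ∑ s, b s * dotv v (fun p : Z × S => q s (p.2, p.1)) := by
          refine Finset.sum_le_sum fun s _ => ?_
          exact mul_le_mul_of_nonneg_left (hmval_le v s (hq s (Set.mem_univ s))) (hb.1 s)
      _ = dotv v (Lm q) := (hdotLm v q).symm
      _ ≤ suppF K' (Lm q) := dotv_le_suppF hK'c hv _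
  choose qm hqmB hqmmin using fun s =>
    (hBc s).exists_isMinOn (hBne s) (hcflip vstar).continuousOn
  have hmeq : ∀ s, mval (Bs s) vstar = dotv vstar (fun p : Z × S => qm s (p.2, p.1)) := by
    intro s
    refine le_antisymm (hmval_le vstar s (hqmB s)) (le_csInf ((hBne s).image _) ?_)
    rintro y ⟨q, hq, rfl⟩
    exact hqmmin s hq
  have hqmpi : qm ∈ piB := fun s _ => hqmB s
  have hstar : η ≤ ∑ s, b s * mval (Bs s) vstar := by
    have h1 := hvstar (Lm qm) (Set.mem_image_of_mem _ hqmpi)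
    rw [hdotLm] at h1
    have h2 : (∑ s, b s * mval (Bs s) vstar)
        = ∑ s, b s * dotv vstar (fun p : Z × S => qm s (p.2, p.1)) :=
      Finset.sum_congr rfl fun s _ => by rw [hmeq s]
    rw [h2]
    exact h1
  have hBddA : BddAbove ((fun v => ∑ s, b s * mval (Bs s) v) '' K') := by
    refine ⟨η, ?_⟩
    rintro y ⟨v, hv, rfl⟩
    exact hub v hv
  rw [himg]
  refine le_antisymm (hstar.trans (le_csSup hBddA (Set.mem_image_of_mem _ hvstarK))) ?_
  refine csSup_le (hK'ne.image _) ?_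
  rintro y ⟨v, hv, rfl⟩
  exact hub v hv

lemma sInf_UVal_eq {A : Type*} [Fintype A]
    (pbar c : A → S → (S × Z) → ℝ)
    (hpbar : ∀ a s, pbar a s ∈ stdSimplex ℝ (S × Z))
    (hc : ∀ a s i, 0 ≤ c a s i)
    (r : A → S → ℝ) {β : ℝ} (hβ0 : 0 < β)
    {Λ : Set (S → ℝ)} (hΛc : IsCompact Λ) (hΛne : Λ.Nonempty)
    {V : (S → ℝ) → ℝ} (hV : ∀ y ∈ stdSimplex ℝ S, V y = suppF Λ y)
    {b : S → ℝ} (hb : b ∈ stdSimplex ℝ S) (a : A) :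
    sInf ((fun μ => UVal r β V b a μ) '' DaSet (pbar a) (c a))
      = (∑ s, b s * r a s) + β *
        sInf ((fun q : S → (S × Z) → ℝ => ∑ z, suppF Λ (fun s' => ∑ s, b s * q s (s', z))) ''
          (Set.pi Set.univ fun s => BasSet (pbar a s) (c a s))) := by
  classical
  obtain ⟨R, hR0, hR⟩ := exists_bound_of_isCompact hΛc
  haveI msc1 : MeasurableSingletonClass (((S×Z)→ℝ) × ((S×Z)→ℝ)) :=
    ⟨fun x => isClosed_singleton.measurableSet⟩
  haveI msc2 : MeasurableSingletonClass (S → ((S×Z)→ℝ) × ((S×Z)→ℝ)) :=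
    ⟨fun x => isClosed_singleton.measurableSet⟩
  set Bs : S → Set ((S × Z) → ℝ) := fun s => BasSet (pbar a s) (c a s) with hBs
  set piB := Set.pi Set.univ Bs with hpiBdef
  set Φ : (S → (S × Z) → ℝ) → ℝ :=
    fun q => ∑ z, suppF Λ (fun s' => ∑ s, b s * q s (s', z)) with hΦ
  set br := ∑ s, b s * r a s with hbr
  have hXm : ∀ s, MeasurableSet (XasSet (pbar a s)) :=
    fun s => (isClosed_xasSet _).measurableSet
  have hΦcont : Continuous Φ := by
    refine continuous_finset_sum _ fun z _ => ?_
    exact (continuous_suppF hΛc hΛne).comp (continuous_pi fun s' =>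
      continuous_finset_sum _ fun s _ =>
        continuous_const.mul ((continuous_apply ((s', z))).comp (continuous_apply s)))
  have hpiBc : IsCompact piB := isCompact_univ_pi fun s => basSet_isCompact _ _
  have hpiBne : piB.Nonempty :=
    Set.univ_pi_nonempty_iff.mpr fun s => ⟨pbar a s, pbar_mem_basSet (hpbar a s) (hc a s)⟩
  obtain ⟨qstar, hqstarB, hqstarmin⟩ := hpiBc.exists_isMinOn hpiBne hΦcont.continuousOn
  -- simplex coordinate bound
  have hsimplex_le_one : ∀ {p : (S × Z) → ℝ}, p ∈ stdSimplex ℝ (S × Z) → ∀ i, p i ≤ 1 := by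
    intro p hp i
    calc p i ≤ ∑ j, p j := Finset.single_le_sum (fun j _ => hp.1 j) (Finset.mem_univ i)
      _ = 1 := hp.2
  -- the w-vector bound
  have hwbd : ∀ (p : S → (S × Z) → ℝ), (∀ s, p s ∈ stdSimplex ℝ (S × Z)) → ∀ z,
      |suppF Λ (fun s' => ∑ s, b s * p s (s', z))| ≤ (Fintype.card S) * R := by
    intro p hp z
    have hnorm : ‖(fun s' => ∑ s, b s * p s (s', z))‖ ≤ 1 := by
      rw [pi_norm_le_iff_of_nonneg (by norm_num)]
      intro s'
      rw [Real.norm_eq_abs, abs_of_nonneg (Finset.sum_nonneg fun s _ =>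
        mul_nonneg (hb.1 s) ((hp s).1 (s', z)))]
      calc (∑ s, b s * p s (s', z)) ≤ ∑ s, b s := by
            refine Finset.sum_le_sum fun s _ => ?_
            calc b s * p s (s', z) ≤ b s * 1 :=
                  mul_le_mul_of_nonneg_left (hsimplex_le_one (hp s) (s', z)) (hb.1 s)
              _ = b s := mul_one _
        _ = 1 := hb.2
    calc |suppF Λ (fun s' => ∑ s, b s * p s (s', z))|
        ≤ (Fintype.card S) * R * ‖(fun s' => ∑ s, b s * p s (s', z))‖ :=
          abs_suppF_le hΛc hΛne hR _
      _ ≤ (Fintype.card S) * R * 1 := by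
          refine mul_le_mul_of_nonneg_left hnorm (by positivity)
      _ = (Fintype.card S) * R := mul_one _
  -- Dirac measures
  have hdirac : ∀ q ∈ piB,
      (Measure.pi fun s => Measure.dirac ((q s, c a s) : ((S×Z)→ℝ) × ((S×Z)→ℝ)))
        ∈ DaSet (pbar a) (c a) ∧
      UVal r β V b a (Measure.pi fun s => Measure.dirac ((q s, c a s) : ((S×Z)→ℝ) × ((S×Z)→ℝ)))
        = br + β * Φ q := by
    intro q hq
    have hqs : ∀ s, q s ∈ Bs s := fun s => hq s (Set.mem_univ s)
    have hmemX : ∀ s, ((q s, c a s) : ((S×Z)→ℝ) × ((S×Z)→ℝ)) ∈ XasSet (pbar a s) := by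
      intro s
      refine ⟨fun i => (abs_le.mp ((hqs s).2 i)).2, fun i => ?_, (hqs s).1⟩
      have := (abs_le.mp ((hqs s).2 i)).1
      simp only
      linarith
    constructor
    · refine ⟨fun s => Measure.dirac ((q s, c a s) : ((S×Z)→ℝ) × ((S×Z)→ℝ)),
        fun s => ⟨inferInstance, ?_, ?_, ?_⟩, rfl⟩
      · rw [Measure.dirac_apply' _ (hXm s), Set.indicator_of_mem (hmemX s)]
        rfl
      · exact (integrable_const ((q s, c a s) : ((S×Z)→ℝ) × ((S×Z)→ℝ)).2).congr
          (ae_eq_dirac (fun y : ((S×Z)→ℝ) × ((S×Z)→ℝ) => y.2)).symm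
      · rw [integral_dirac]
    · rw [UVal, pi_dirac, integral_dirac]
      congr 1
      rw [hΦ]
      congr 1
      refine Finset.sum_congr rfl fun z _ => ?_
      exact bTerm_eq hΛc hΛne hV hb (fun s => (hqs s).1) z
  -- lower bound
  have hlow : ∀ μ ∈ DaSet (pbar a) (c a), br + β * Φ qstar ≤ UVal r β V b a μ := by
    rintro μ ⟨ν, hν, rfl⟩
    haveI hprob : ∀ s, IsProbabilityMeasure (ν s) := fun s => (hν s).1
    have haeX : ∀ s, ∀ᵐ y ∂(ν s), y ∈ XasSet (pbar a s) := fun s =>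
      (mem_ae_iff_prob_eq_one (hXm s)).mpr (hν s).2.1
    have hint1 : ∀ s i, Integrable (fun y : ((S×Z)→ℝ) × ((S×Z)→ℝ) => y.1 i) (ν s) := by
      intro s i
      refine Integrable.mono' (integrable_const (1:ℝ))
        (((continuous_apply i).comp continuous_fst).aestronglyMeasurable) ?_
      filter_upwards [haeX s] with y hy
      rw [Real.norm_eq_abs, abs_of_nonneg (hy.2.2.1 i)]
      exact hsimplex_le_one hy.2.2 i
    have hint2 : ∀ s i, Integrable (fun y : ((S×Z)→ℝ) × ((S×Z)→ℝ) => y.2 i) (ν s) := by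
      intro s i
      exact (ContinuousLinearMap.proj (R := ℝ) (φ := fun _ : S × Z => ℝ) i).integrable_comp
        (hν s).2.2.1
    have hc2 : ∀ s i, ∫ y, (y : ((S×Z)→ℝ) × ((S×Z)→ℝ)).2 i ∂(ν s) = c a s i := by
      intro s i
      have h1 := (ContinuousLinearMap.proj (R := ℝ) (φ := fun _ : S × Z => ℝ) i).integral_comp_comm
        (hν s).2.2.1
      rw [(hν s).2.2.2] at h1
      exact h1
    set pm : S → (S × Z) → ℝ := fun s i => ∫ y, (y : ((S×Z)→ℝ) × ((S×Z)→ℝ)).1 i ∂(ν s) with hpm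
    have hpmB : ∀ s, pm s ∈ Bs s := by
      intro s
      refine ⟨⟨fun i => integral_nonneg_of_ae ((haeX s).mono fun y hy => hy.2.2.1 i), ?_⟩,
        fun i => ?_⟩
      · rw [← integral_finset_sum _ (fun i _ => hint1 s i),
          integral_congr_ae (g := fun _ => (1:ℝ)) ((haeX s).mono fun y hy => hy.2.2.2)]
        simp
      · rw [abs_le]
        have e0 : ∫ _y, pbar a s i ∂(ν s) = pbar a s i := by
          rw [integral_const]; simp
        constructor
        · have hmono : ∫ y, (pbar a s i - y.1 i) ∂(ν s) ≤ ∫ y, y.2 i ∂(ν s) :=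
            integral_mono_ae ((integrable_const (pbar a s i)).sub (hint1 s i)) (hint2 s i)
              ((haeX s).mono fun y hy => hy.2.1 i)
          rw [integral_sub (integrable_const _) (hint1 s i), e0, hc2 s i] at hmono
          have : pm s i = ∫ y, y.1 i ∂(ν s) := rfl
          linarith [hmono]
        · have hmono : ∫ y, (y.1 i - pbar a s i) ∂(ν s) ≤ ∫ y, y.2 i ∂(ν s) :=
            integral_mono_ae ((hint1 s i).sub (integrable_const (pbar a s i))) (hint2 s i)
              ((haeX s).mono fun y hy => hy.1 i)
          rw [integral_sub (hint1 s i) (integrable_const _), e0, hc2 s i] at hmono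
          have : pm s i = ∫ y, y.1 i ∂(ν s) := rfl
          linarith [hmono]
    have haePi : ∀ᵐ x ∂(Measure.pi ν), ∀ s, (x s) ∈ XasSet (pbar a s) := by
      have hμ1 : (Measure.pi ν) (Set.pi Set.univ fun s => XasSet (pbar a s)) = 1 := by
        rw [Measure.pi_pi]
        exact Finset.prod_eq_one fun s _ => (hν s).2.1
      have hmem := (mem_ae_iff_prob_eq_one (MeasurableSet.univ_pi fun s => hXm s)).mpr hμ1
      filter_upwards [hmem] with x hx s
      exact hx s (Set.mem_univ s)
    set h : (S → ((S×Z)→ℝ) × ((S×Z)→ℝ)) → ℝ :=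
      fun x => ∑ z, suppF Λ (fun s' => ∑ s, b s * (x s).1 (s', z)) with hh
    have hgcont : ∀ z : Z, Continuous fun x : S → ((S×Z)→ℝ) × ((S×Z)→ℝ) =>
        suppF Λ (fun s' => ∑ s, b s * (x s).1 (s', z)) := by
      intro z
      exact (continuous_suppF hΛc hΛne).comp (continuous_pi fun s' =>
        continuous_finset_sum _ fun s _ => continuous_const.mul
          ((continuous_apply ((s', z))).comp (continuous_fst.comp (continuous_apply s))))
    have hgint : ∀ z : Z, Integrable (fun x : S → ((S×Z)→ℝ) × ((S×Z)→ℝ) =>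
        suppF Λ (fun s' => ∑ s, b s * (x s).1 (s', z))) (Measure.pi ν) := by
      intro z
      refine Integrable.mono' (integrable_const ((Fintype.card S : ℝ) * R))
        (hgcont z).aestronglyMeasurable ?_
      filter_upwards [haePi] with x hx
      rw [Real.norm_eq_abs]
      exact hwbd _ (fun s => (hx s).2.2) z
    have hhint : Integrable h (Measure.pi ν) := by
      rw [hh]
      exact integrable_finset_sum _ fun z _ => hgint z
    have hPint : ∀ s i, Integrable (fun x : S → ((S×Z)→ℝ) × ((S×Z)→ℝ) => (x s).1 i)
        (Measure.pi ν) := by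
      intro s i
      refine Integrable.mono' (integrable_const (1:ℝ))
        (((continuous_apply i).comp (continuous_fst.comp (continuous_apply s))).aestronglyMeasurable) ?_
      filter_upwards [haePi] with x hx
      rw [Real.norm_eq_abs, abs_of_nonneg ((hx s).2.2.1 i)]
      exact hsimplex_le_one (hx s).2.2 i
    have hUeq : UVal r β V b a (Measure.pi ν) = br + β * ∫ x, h x ∂(Measure.pi ν) := by
      rw [UVal]
      have hcongr : (fun x : S → ((S×Z)→ℝ) × ((S×Z)→ℝ) =>
          (∑ s, b s * r a s) + β * ∑ z, bTerm V b (fun s => (x s).1) z)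
          =ᵐ[Measure.pi ν] fun x => br + β * h x := by
        filter_upwards [haePi] with x hx
        rw [← hbr]
        congr 1
        rw [hh]
        congr 1
        exact Finset.sum_congr rfl fun z _ =>
          bTerm_eq hΛc hΛne hV hb (fun s => (hx s).2.2) z
      rw [integral_congr_ae hcongr, integral_add (integrable_const br) (hhint.const_mul β),
        integral_const_mul, integral_const]
      simp [measure_univ]
    have hIz : ∀ z : Z, suppF Λ (fun s' => ∑ s, b s * pm s (s', z))
        ≤ ∫ x, suppF Λ (fun s' => ∑ s, b s * (x s).1 (s', z)) ∂(Measure.pi ν) := by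
      intro z
      refine suppF_le hΛne fun α hα => ?_
      have hterm_int : ∀ s', Integrable
          (fun x : S → ((S×Z)→ℝ) × ((S×Z)→ℝ) => α s' * ∑ s, b s * (x s).1 (s', z))
          (Measure.pi ν) := fun s' =>
        (integrable_finset_sum _ fun s _ => (hPint s ((s', z))).const_mul (b s)).const_mul (α s')
      have hRHSeq : ∫ x, dotv α (fun s' => ∑ s, b s * (x s).1 (s', z)) ∂(Measure.pi ν)
          = ∑ s', α s' * ∑ s, b s * pm s (s', z) := by
        calc ∫ x, dotv α (fun s' => ∑ s, b s * (x s).1 (s', z)) ∂(Measure.pi ν)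
            = ∫ x, ∑ s', α s' * ∑ s, b s * (x s).1 (s', z) ∂(Measure.pi ν) := rfl
          _ = ∑ s', ∫ x, α s' * ∑ s, b s * (x s).1 (s', z) ∂(Measure.pi ν) :=
              integral_finset_sum _ (fun s' _ => hterm_int s')
          _ = ∑ s', α s' * ∑ s, b s * pm s (s', z) := by
              refine Finset.sum_congr rfl fun s' _ => ?_
              rw [integral_const_mul]
              congr 1
              rw [integral_finset_sum _ (fun s _ => (hPint s ((s', z))).const_mul (b s))]
              refine Finset.sum_congr rfl fun s _ => ?_
              rw [integral_const_mul]
              congr 1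
              exact integral_eval_pi ν s (fun y => y.1 ((s', z)))
                (((continuous_apply ((s', z))).comp continuous_fst).aestronglyMeasurable)
      have hdot_int : Integrable
          (fun x : S → ((S×Z)→ℝ) × ((S×Z)→ℝ) => dotv α (fun s' => ∑ s, b s * (x s).1 (s', z)))
          (Measure.pi ν) := integrable_finset_sum _ (fun s' _ => hterm_int s')
      calc dotv α (fun s' => ∑ s, b s * pm s (s', z))
          = ∫ x, dotv α (fun s' => ∑ s, b s * (x s).1 (s', z)) ∂(Measure.pi ν) := by
            rw [hRHSeq]; rfl
        _ ≤ ∫ x, suppF Λ (fun s' => ∑ s, b s * (x s).1 (s', z)) ∂(Measure.pi ν) := by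
            refine integral_mono hdot_int (hgint z) fun x => ?_
            exact dotv_le_suppF hΛc hα _
    have hΦpm : Φ pm ≤ ∫ x, h x ∂(Measure.pi ν) := by
      rw [hh]
      rw [integral_finset_sum _ (fun z _ => hgint z)]
      exact Finset.sum_le_sum fun z _ => hIz z
    have hpmpi : pm ∈ piB := fun s _ => hpmB s
    have hqpm : Φ qstar ≤ Φ pm := hqstarmin hpmpi
    rw [hUeq]
    have h1 : β * Φ qstar ≤ β * ∫ x, h x ∂(Measure.pi ν) :=
      mul_le_mul_of_nonneg_left (hqpm.trans hΦpm) hβ0.le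
    linarith
  have hleast : IsLeast ((fun μ => UVal r β V b a μ) '' DaSet (pbar a) (c a)) (br + β * Φ qstar) := by
    constructor
    · exact ⟨_, (hdirac qstar hqstarB).1, (hdirac qstar hqstarB).2⟩
    · rintro y ⟨μ, hμ, rfl⟩
      exact hlow μ hμ
  rw [hleast.csInf_eq]
  congr 1
  have hinf : sInf (Φ '' piB) = Φ qstar :=
    IsLeast.csInf_eq ⟨Set.mem_image_of_mem _ hqstarB, by rintro y ⟨q, hq, rfl⟩; exact hqstarmin hq⟩
  rw [hinf]

lemma Lop_rep {A : Type*} [Fintype A] [Nonempty A]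
    (pbar c : A → S → (S × Z) → ℝ)
    (hpbar : ∀ a s, pbar a s ∈ stdSimplex ℝ (S × Z))
    (hc : ∀ a s i, 0 ≤ c a s i)
    (r : A → S → ℝ) {β : ℝ} (hβ0 : 0 < β)
    {Λ : Set (S → ℝ)} (hΛc : IsCompact Λ) (hΛne : Λ.Nonempty) (hΛcv : Convex ℝ Λ)
    {V : (S → ℝ) → ℝ} (hV : ∀ y ∈ stdSimplex ℝ S, V y = suppF Λ y) :
    ∃ Λ' : Set (S → ℝ), Λ'.Nonempty ∧ IsCompact Λ' ∧ Convex ℝ Λ' ∧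
      ∀ b ∈ stdSimplex ℝ S, Lop pbar c r β V b = suppF Λ' b := by
  classical
  obtain ⟨R, hR0, hR⟩ := exists_bound_of_isCompact hΛc
  obtain ⟨Rr, hRr0, hRr⟩ : ∃ Rr, 0 ≤ Rr ∧ ∀ a s, |r a s| ≤ Rr := by
    refine ⟨∑ a, ∑ s, |r a s|, by positivity, fun a s => ?_⟩
    calc |r a s| ≤ ∑ s', |r a s'| :=
          Finset.single_le_sum (f := fun s' => |r a s'|) (fun j _ => abs_nonneg _)
            (Finset.mem_univ s)
      _ ≤ ∑ a', ∑ s', |r a' s'| :=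
          Finset.single_le_sum (f := fun a' => ∑ s', |r a' s'|)
            (fun j _ => Finset.sum_nonneg fun _ _ => abs_nonneg _) (Finset.mem_univ a)
  set K' : Set (Z × S → ℝ) := liftK (Z := Z) Λ with hK'def
  have hK'c : IsCompact K' := liftK_isCompact hΛc
  have hK'ne : K'.Nonempty := liftK_nonempty hΛne
  have hK'cv : Convex ℝ K' := liftK_convex hΛcv
  set Bs : A → S → Set ((S × Z) → ℝ) := fun a s => BasSet (pbar a s) (c a s) with hBsdef
  have hBne : ∀ a s, (Bs a s).Nonempty :=
    fun a s => ⟨pbar a s, pbar_mem_basSet (hpbar a s) (hc a s)⟩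
  have hvK'bd : ∀ v ∈ K', ∀ p : Z × S, |v p| ≤ R := by
    intro v hv p
    have := hR _ (hv p.1) p.2
    simpa using this
  have habsdot : ∀ (v : Z × S → ℝ), (∀ p, |v p| ≤ R) → ∀ a s, ∀ q ∈ Bs a s,
      |dotv v (fun p : Z × S => q (p.2, p.1))| ≤ R := by
    intro v hv a s q hq
    have hqsum : ∑ p : Z × S, q (p.2, p.1) = 1 := by
      have h1 : ∑ p : Z × S, q (p.2, p.1) = ∑ i : S × Z, q i := by
        rw [Fintype.sum_prod_type, Fintype.sum_prod_type]
        exact Finset.sum_comm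
      rw [h1]
      exact hq.1.2
    calc |dotv v (fun p : Z × S => q (p.2, p.1))|
        ≤ ∑ p : Z × S, |v p * q (p.2, p.1)| := Finset.abs_sum_le_sum_abs _ _
      _ ≤ ∑ p : Z × S, R * q (p.2, p.1) := by
          refine Finset.sum_le_sum fun p _ => ?_
          rw [abs_mul, abs_of_nonneg (hq.1.1 _)]
          exact mul_le_mul_of_nonneg_right (hv p) (hq.1.1 _)
      _ = R * ∑ p : Z × S, q (p.2, p.1) := (Finset.mul_sum _ _ _).symm
      _ = R := by rw [hqsum, mul_one]
  have hm : ∀ a s, ∀ v ∈ K', |mval (Bs a s) v| ≤ R := by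
    intro a s v hv
    rw [abs_le]
    constructor
    · refine le_csInf ((hBne a s).image _) ?_
      rintro y ⟨q, hq, rfl⟩
      exact (abs_le.mp (habsdot v (hvK'bd v hv) a s q hq)).1
    · obtain ⟨q0, hq0⟩ := hBne a s
      refine le_trans (csInf_le ⟨-R, ?_⟩ (Set.mem_image_of_mem _ hq0)) ?_
      · rintro y ⟨q, hq, rfl⟩
        exact (abs_le.mp (habsdot v (hvK'bd v hv) a s q hq)).1
      · exact (abs_le.mp (habsdot v (hvK'bd v hv) a s q0 hq0)).2
  set Λa : A → Set (S → ℝ) :=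
    fun a => (fun v => fun s => r a s + β * mval (Bs a s) v) '' K' with hΛadef
  set Λ0 : Set (S → ℝ) := ⋃ a, Λa a with hΛ0def
  set C0 : ℝ := Rr + β * R with hC0def
  have hC00 : 0 ≤ C0 := by positivity
  have hΛ0bd : ∀ α ∈ Λ0, ∀ s, |α s| ≤ C0 := by
    intro α hα s
    rw [Set.mem_iUnion] at hα
    obtain ⟨a, v, hv, rfl⟩ := hα
    calc |r a s + β * mval (Bs a s) v| ≤ |r a s| + |β * mval (Bs a s) v| := abs_add_le _ _
      _ ≤ Rr + β * R := by
          rw [abs_mul, abs_of_pos hβ0]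
          exact add_le_add (hRr a s) (mul_le_mul_of_nonneg_left (hm a s v hv) hβ0.le)
  set Λ' : Set (S → ℝ) := closure (convexHull ℝ Λ0) with hΛ'def
  have hΛ0sub : Λ0 ⊆ Metric.closedBall 0 C0 := by
    intro α hα
    rw [Metric.mem_closedBall, dist_zero_right, pi_norm_le_iff_of_nonneg hC00]
    intro s
    rw [Real.norm_eq_abs]
    exact hΛ0bd α hα s
  have hΛ'sub : Λ' ⊆ Metric.closedBall 0 C0 :=
    closure_minimal (convexHull_min hΛ0sub (convex_closedBall _ _)) Metric.isClosed_closedBall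
  have hΛ'c : IsCompact Λ' := Metric.isCompact_iff_isClosed_bounded.mpr
    ⟨isClosed_closure, Metric.isBounded_closedBall.subset hΛ'sub⟩
  have hΛ'cv : Convex ℝ Λ' := (convex_convexHull ℝ Λ0).closure
  have hΛ0ne : Λ0.Nonempty := by
    obtain ⟨v0, hv0⟩ := hK'ne
    exact ⟨_, Set.mem_iUnion.mpr ⟨Classical.arbitrary A, Set.mem_image_of_mem _ hv0⟩⟩
  have hΛ'ne : Λ'.Nonempty := by
    obtain ⟨α, hα⟩ := hΛ0ne
    exact ⟨α, subset_closure (subset_convexHull ℝ _ hα)⟩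
  have hΛ'bd : ∀ α ∈ Λ', ∀ s, |α s| ≤ C0 := by
    intro α hα s
    have h1 := hΛ'sub hα
    rw [Metric.mem_closedBall, dist_zero_right] at h1
    calc |α s| = ‖α s‖ := rfl
      _ ≤ ‖α‖ := norm_le_pi_norm α s
      _ ≤ C0 := h1
  refine ⟨Λ', hΛ'ne, hΛ'c, hΛ'cv, ?_⟩
  intro b hb
  have hdotb : ∀ (C' : ℝ) (α : S → ℝ), (∀ s, |α s| ≤ C') → dotv α b ≤ C' := by
    intro C' α hα
    calc dotv α b ≤ ∑ s, C' * b s := by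
          refine Finset.sum_le_sum fun s _ => ?_
          exact mul_le_mul_of_nonneg_right ((le_abs_self _).trans (hα s)) (hb.1 s)
      _ = C' := by rw [← Finset.mul_sum, hb.2, mul_one]
  have hkey : ∀ a : A, sInf ((fun μ => UVal r β V b a μ) '' DaSet (pbar a) (c a))
      = sSup ((fun α => dotv α b) '' Λa a) := by
    intro a
    rw [sInf_UVal_eq pbar c hpbar hc r hβ0 hΛc hΛne hV hb a]
    rw [box_inf_eq hΛc hΛne hΛcv hb (Bs a) (fun s => basSet_isCompact _ _)
      (fun s => hBne a s) (fun s => basSet_convex _ _)]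
    have himg : (fun α => dotv α b) '' Λa a
        = (fun x => (∑ s, b s * r a s) + β * x) ''
          ((fun v => ∑ s, b s * mval (Bs a s) v) '' K') := by
      rw [hΛadef, Set.image_image, Set.image_image]
      refine Set.image_congr fun v _ => ?_
      calc dotv (fun s => r a s + β * mval (Bs a s) v) b
          = ∑ s, (r a s + β * mval (Bs a s) v) * b s := rfl
        _ = ∑ s, (b s * r a s + β * (b s * mval (Bs a s) v)) :=
            Finset.sum_congr rfl fun s _ => by ring
        _ = (∑ s, b s * r a s) + β * ∑ s, b s * mval (Bs a s) v := by
            rw [Finset.sum_add_distrib, Finset.mul_sum]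
    have hbd2 : BddAbove ((fun v => ∑ s, b s * mval (Bs a s) v) '' K') := by
      refine ⟨R, ?_⟩
      rintro y ⟨v, hv, rfl⟩
      calc (∑ s, b s * mval (Bs a s) v) ≤ ∑ s, b s * R := by
            refine Finset.sum_le_sum fun s _ => ?_
            exact mul_le_mul_of_nonneg_left ((le_abs_self _).trans (hm a s v hv)) (hb.1 s)
        _ = R := by rw [← Finset.sum_mul, hb.2, one_mul]
    rw [himg, csSup_affine hβ0 (hK'ne.image _) hbd2]
  have hSa_ne : ∀ a, ((fun α => dotv α b) '' Λa a).Nonempty :=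
    fun a => (hK'ne.image _).image _
  have hSa_bdd : ∀ a, BddAbove ((fun α => dotv α b) '' Λa a) := by
    intro a
    refine ⟨C0, ?_⟩
    rintro y ⟨α, hα, rfl⟩
    exact hdotb C0 α (hΛ0bd α (Set.mem_iUnion.mpr ⟨a, hα⟩))
  have hLop : Lop pbar c r β V b = ⨆ a, sSup ((fun α => dotv α b) '' Λa a) := by
    rw [Lop]
    exact iSup_congr hkey
  have hunion : (⨆ a, sSup ((fun α => dotv α b) '' Λa a))
      = sSup ((fun α => dotv α b) '' Λ0) := by
    have himgU : (fun α => dotv α b) '' Λ0 = ⋃ a, (fun α => dotv α b) '' Λa a := by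
      rw [hΛ0def, Set.image_iUnion]
    rw [himgU]
    refine (IsLUB.csSup_eq ?_ ?_).symm
    · constructor
      · rintro y hy
        rw [Set.mem_iUnion] at hy
        obtain ⟨a, hy⟩ := hy
        exact le_trans (le_csSup (hSa_bdd a) hy)
          (le_ciSup (f := fun a => sSup ((fun α => dotv α b) '' Λa a))
            (Set.finite_range _).bddAbove a)
      · intro ub hub
        exact ciSup_le fun a => csSup_le (hSa_ne a) fun x hx =>
          hub (Set.mem_iUnion.mpr ⟨a, hx⟩)
    · obtain ⟨y, hy⟩ := hSa_ne (Classical.arbitrary A)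
      exact ⟨y, Set.mem_iUnion.mpr ⟨Classical.arbitrary A, hy⟩⟩
  have hclosure : sSup ((fun α => dotv α b) '' Λ0) = suppF Λ' b := by
    set M := sSup ((fun α => dotv α b) '' Λ0) with hM
    have hΛ0b : BddAbove ((fun α => dotv α b) '' Λ0) := by
      refine ⟨C0, ?_⟩
      rintro y ⟨α, hα, rfl⟩
      exact hdotb C0 α (hΛ0bd α hα)
    have hCset : Λ' ⊆ {x : S → ℝ | dotv x b ≤ M} := by
      have hCclosed : IsClosed {x : S → ℝ | dotv x b ≤ M} :=
        isClosed_le (continuous_dotv_left b) continuous_const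
      have hCconv : Convex ℝ {x : S → ℝ | dotv x b ≤ M} := by
        intro x hx y hy a' b' ha' hb' hab'
        have hlin : dotv (a' • x + b' • y) b = a' * dotv x b + b' * dotv y b := by
          simp only [DRAux.dotv, Pi.add_apply, Pi.smul_apply, smul_eq_mul, Finset.mul_sum,
            ← Finset.sum_add_distrib]
          exact Finset.sum_congr rfl fun s _ => by ring
        show dotv (a' • x + b' • y) b ≤ M
        rw [hlin]
        calc a' * dotv x b + b' * dotv y b ≤ a' * M + b' * M :=
              add_le_add (mul_le_mul_of_nonneg_left hx ha')
                (mul_le_mul_of_nonneg_left hy hb')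
          _ = M := by rw [← add_mul, hab', one_mul]
      have hΛ0C : Λ0 ⊆ {x : S → ℝ | dotv x b ≤ M} := fun α hα =>
        le_csSup hΛ0b (Set.mem_image_of_mem _ hα)
      exact closure_minimal (convexHull_min hΛ0C hCconv) hCclosed
    refine le_antisymm ?_ ?_
    · refine csSup_le_csSup ?_ ((hΛ0ne).image _) ?_
      · refine ⟨C0, ?_⟩
        rintro y ⟨α, hα, rfl⟩
        exact hdotb C0 α (hΛ'bd α hα)
      · exact Set.image_mono fun α hα => subset_closure (subset_convexHull ℝ _ hα)
    · exact csSup_le (hΛ'ne.image _) (by rintro y ⟨α, hα, rfl⟩; exact hCset hα)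
  rw [hLop, hunion, hclosure]

end MainAux

/-- For a finite horizon `T ≥ 1`, the value functions defined by `V^T ≡ 0` and
`V^t = L V^{t+1}` are bounded on `Δ(S)` and each admits a set `Λ^t ⊆ ℝ^S` of slopes with
`V^t(b) = sup_{α ∈ Λ^t} ⟨α, b⟩` on `Δ(S)`; in particular each `V^t` is convex in the belief. -/
theorem finite_horizon_value_pwlc {S Z A : Type*} [Fintype S] [Nonempty S]
    [Fintype Z] [Nonempty Z] [Fintype A] [Nonempty A]
    (pbar c : A → S → (S × Z) → ℝ)
    (hpbar : ∀ a s, pbar a s ∈ stdSimplex ℝ (S × Z))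
    (hc : ∀ a s i, 0 ≤ c a s i)
    (r : A → S → ℝ) (β : ℝ) (hβ0 : 0 < β) (hβ1 : β < 1)
    (T : ℕ) (hT : 1 ≤ T)
    (Vt : ℕ → (S → ℝ) → ℝ)
    (hVT : ∀ b, Vt T b = 0)
    (hrec : ∀ t, 1 ≤ t → t + 1 ≤ T → Vt t = Lop pbar c r β (Vt (t + 1))) :
    ∀ t, 1 ≤ t → t ≤ T →
      (∃ M, ∀ b ∈ stdSimplex ℝ S, |Vt t b| ≤ M) ∧
      (∃ Λ : Set (S → ℝ), ∀ b ∈ stdSimplex ℝ S,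
        Vt t b = sSup ((fun α => ∑ s, α s * b s) '' Λ)) ∧
      ConvexOn ℝ (stdSimplex ℝ S) (Vt t) := by
  classical
  have main : ∀ n t, 1 ≤ t → t + n = T →
      ∃ Λ : Set (S → ℝ), Λ.Nonempty ∧ IsCompact Λ ∧ Convex ℝ Λ ∧
        ∀ b ∈ stdSimplex ℝ S, Vt t b = DRAux.suppF Λ b := by
    intro n
    induction n with
    | zero =>
      intro t ht1 htT
      rw [Nat.add_zero] at htT
      subst htT
      refine ⟨{0}, ⟨0, rfl⟩, isCompact_singleton, convex_singleton 0, fun b hb => ?_⟩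
      rw [hVT b, DRAux.suppF, Set.image_singleton,
        show DRAux.dotv (0 : S → ℝ) b = 0 by simp [DRAux.dotv]]
      exact (csSup_singleton 0).symm
    | succ n ih =>
      intro t ht1 htT
      have ht1' : t + 1 ≤ T := by omega
      have hrec' := hrec t ht1 ht1'
      obtain ⟨Λ, hne, hcp, hcv, hrep⟩ := ih (t + 1) (by omega) (by omega)
      obtain ⟨Λ', h1, h2, h3, h4⟩ := Lop_rep pbar c hpbar hc r hβ0 hcp hne hcv hrep
      exact ⟨Λ', h1, h2, h3, fun b hb => by rw [hrec']; exact h4 b hb⟩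
  intro t ht1 htT
  obtain ⟨Λ, hne, hcp, hcv, hrep⟩ := main (T - t) t ht1 (by omega)
  obtain ⟨R, hR0, hR⟩ := DRAux.exists_bound_of_isCompact hcp
  have hdb : ∀ b ∈ stdSimplex ℝ S, ∀ α ∈ Λ, |DRAux.dotv α b| ≤ R := by
    intro b hb α hα
    calc |DRAux.dotv α b| ≤ ∑ s, |α s * b s| := Finset.abs_sum_le_sum_abs _ _
      _ ≤ ∑ s, R * b s := by
          refine Finset.sum_le_sum fun s _ => ?_
          rw [abs_mul, abs_of_nonneg (hb.1 s)]
          exact mul_le_mul_of_nonneg_right (hR α hα s) (hb.1 s)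
      _ = R := by rw [← Finset.mul_sum, hb.2, mul_one]
  refine ⟨⟨R, fun b hb => ?_⟩, ⟨Λ, fun b hb => ?_⟩, ?_⟩
  · rw [hrep b hb, abs_le]
    constructor
    · obtain ⟨α, hα⟩ := hne
      have h1 := DRAux.dotv_le_suppF hcp hα b
      have h2 := (abs_le.mp (hdb b hb α hα)).1
      linarith
    · exact DRAux.suppF_le hne fun α hα => (abs_le.mp (hdb b hb α hα)).2
  · exact hrep b hb
  · refine ⟨convex_stdSimplex ℝ S, ?_⟩
    intro x hx y hy a b' ha hb' hab
    have hxy : a • x + b' • y ∈ stdSimplex ℝ S := convex_stdSimplex ℝ S hx hy ha hb' hab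
    rw [hrep _ hxy, hrep x hx, hrep y hy]
    calc DRAux.suppF Λ (a • x + b' • y)
        ≤ DRAux.suppF Λ (a • x) + DRAux.suppF Λ (b' • y) := DRAux.suppF_add_le hcp hne _ _
      _ = a * DRAux.suppF Λ x + b' * DRAux.suppF Λ y := by
          rw [DRAux.suppF_smul hcp hne ha, DRAux.suppF_smul hcp hne hb']
      _ = a • DRAux.suppF Λ x + b' • DRAux.suppF Λ y := by simp
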